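/- For all n ≥ 1, there exists a word over the alphabet {1,...,n+1} of length n(n+1)/2 that contains, for every permutation of length n, a subsequence order-isomorphic to that permutation. -/

import Mathlib

/-- `w` is a permutation of length `n`: a word on `{1,...,n}` with each letter occurring once. -/
def IsPermWord (n : Nat) (w : List Nat) : Prop :=
  w.length = n ∧ w.Nodup ∧ ∀ x ∈ w, 1 ≤ x ∧ x ≤ n

/-- Two words of the same length are order-isomorphic. -/
def OrdIso (u v : List Nat) : Prop :=
  u.length = v.length ∧ ∀ i j, i < u.length → j < u.length →
    (u.getD i 0 < u.getD j 0 ↔ v.getD i 0 < v.getD j 0)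

namespace MillerAux
open List

/-- Odd letters in `[m, n+1]`, ascending. -/
def ascF (n m : ℕ) : List ℕ :=
  (List.range' 1 (n+1)).filter fun k => decide (k % 2 = 1) && decide (m ≤ k)

/-- Even letters in `[1, m)`, descending. -/
def descF (n m : ℕ) : List ℕ :=
  ((List.range' 1 (n+1)).filter fun k => decide (k % 2 = 0) && decide (k < m)).reverse

/-- Remaining part of run `j` when the next letter to use is `m`. -/
def runF (n j m : ℕ) : List ℕ := if j % 2 = 1 then ascF n m else descF n (m+1)

/-- The full `j`-th run. -/
def zrun (n j : ℕ) : List ℕ := if j % 2 = 1 then ascF n 1 else descF n (n+2)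

/-- Runs `j, j+1, ..., n` concatenated. -/
def sufW (n j : ℕ) : List ℕ := (List.range' j (n+1-j)).flatMap (zrun n)

/-- The zigzag word. -/
def W (n : ℕ) : List ℕ := sufW n 1

/-- cost of a gap between consecutive entries. -/
def gap (β x y : ℕ) : ℕ :=
  if x % 2 = y % 2 then (if (x < y) ↔ (x+β) % 2 = 1 then 0 else 2) else 1

def steps (β : ℕ) : ℕ → List ℕ → ℕ
  | _, [] => 0
  | x, y :: r => gap β x y + steps β y r

def start (β x : ℕ) : ℕ := if (x+β) % 2 = 1 then 1 else 2

lemma gap_add (x y : ℕ) : gap 0 x y + gap 1 x y = 2 := by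
  unfold gap
  by_cases h : x % 2 = y % 2
  · simp only [if_pos h]
    by_cases hx : x % 2 = 1
    · have h0 : (x+0) % 2 = 1 := by omega
      have h1 : ¬ ((x+1) % 2 = 1) := by omega
      by_cases hxy : x < y <;> simp [hxy, h0, h1] <;> omega
    · have h0 : ¬ ((x+0) % 2 = 1) := by omega
      have h1 : (x+1) % 2 = 1 := by omega
      by_cases hxy : x < y <;> simp [hxy, h0, h1] <;> omega
  · simp [if_neg h]

lemma steps_add (x : ℕ) (l : List ℕ) : steps 0 x l + steps 1 x l = 2 * l.length := by
  induction l generalizing x with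
  | nil => rfl
  | cons y r ih => simp only [steps, List.length_cons]; have := gap_add x y; have := ih y; omega

lemma start_add (x : ℕ) : start 0 x + start 1 x = 3 := by
  unfold start; split_ifs <;> omega

lemma filter_head (p : ℕ → Bool) {L : List ℕ} (hL : L.Pairwise (· < ·)) {m : ℕ}
    (hm : m ∈ L) (hp : p m = true) :
    (L.filter fun k => p k && decide (m ≤ k)) = m :: (L.filter fun k => p k && decide (m+1 ≤ k)) := by
  induction L with
  | nil => cases hm
  | cons a L ih =>
    obtain ⟨ha, hL'⟩ := List.pairwise_cons.1 hL
    rcases List.mem_cons.1 hm with rfl | hm'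
    · simp only [List.filter_cons]
      rw [if_pos (by simp [hp]), if_neg (by simp)]
      congr 1
      apply List.filter_congr
      intro k hk
      have hk' := ha k hk
      have e1 : decide (m ≤ k) = true := by simp; omega
      have e2 : decide (m+1 ≤ k) = true := by simp; omega
      rw [e1, e2]
    · have ham : a < m := ha m hm'
      simp only [List.filter_cons]
      rw [if_neg (by simp; omega), if_neg (by simp; omega), ih hL' hm']

lemma filter_last (p : ℕ → Bool) {L : List ℕ} (hL : L.Pairwise (· < ·)) {m : ℕ}
    (hm : m ∈ L) (hp : p m = true) :
    (L.filter fun k => p k && decide (k < m+1)) = (L.filter fun k => p k && decide (k < m)) ++ [m] := by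
  induction L with
  | nil => cases hm
  | cons a L ih =>
    obtain ⟨ha, hL'⟩ := List.pairwise_cons.1 hL
    rcases List.mem_cons.1 hm with rfl | hm'
    · simp only [List.filter_cons]
      rw [if_pos (by simp [hp]), if_neg (by simp)]
      have e1 : (L.filter fun k => p k && decide (k < m+1)) = [] := by
        apply List.filter_eq_nil_iff.2
        intro k hk
        have := ha k hk
        simp; omega
      have e2 : (L.filter fun k => p k && decide (k < m)) = [] := by
        apply List.filter_eq_nil_iff.2
        intro k hk
        have := ha k hk
        simp; omega
      rw [e1, e2]
      rfl
    · have ham : a < m := ha m hm'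
      have e1 : decide (a < m+1) = true := by simp; omega
      have e2 : decide (a < m) = true := by simp; omega
      rw [List.filter_cons, List.filter_cons, e1, e2, Bool.and_true,
        ih hL' hm']
      split_ifs
      · rw [List.cons_append]
      · rfl

lemma ascF_head {n m : ℕ} (hm : m % 2 = 1) (h2 : m ≤ n+1) :
    ascF n m = m :: ascF n (m+1) :=
  filter_head _ ((List.pairwise_lt_range' (s := 1) (n := n+1)))
    (by simp only [List.mem_range'_1]; omega) (by simp [hm])

lemma descF_head {n m : ℕ} (hm : m % 2 = 0) (h1 : 1 ≤ m) (h2 : m ≤ n+1) :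
    descF n (m+1) = m :: descF n m := by
  unfold descF
  rw [filter_last _ ((List.pairwise_lt_range' (s := 1) (n := n+1)))
    (by simp only [List.mem_range'_1]; omega) (by simp [hm])]
  simp

lemma ascF_mono {n m m' : ℕ} (h : m ≤ m') : ascF n m' <+ ascF n m :=
  List.monotone_filter_right _ (by intro a ha; simp at ha ⊢; omega)

lemma descF_mono {n m m' : ℕ} (h : m' ≤ m) : descF n m' <+ descF n m :=
  (List.monotone_filter_right _ (by intro a ha; simp at ha ⊢; omega)).reverse

lemma runF_sublist {n j m : ℕ} (h1 : 1 ≤ m) (h : m ≤ n+1) : runF n j m <+ zrun n j := by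
  unfold runF zrun
  split_ifs
  · exact ascF_mono h1
  · exact descF_mono (by omega)

lemma sufW_succ {n j : ℕ} (h : j ≤ n) : sufW n j = zrun n j ++ sufW n (j+1) := by
  unfold sufW
  rw [(by omega : n + 1 - j = (n - j) + 1), List.range'_succ, List.flatMap_cons,
    (by omega : n + 1 - (j+1) = n - j)]

lemma sufW_tail {n j : ℕ} (h : j ≤ n) : sufW n (j+1) <+ sufW n j := by
  rw [sufW_succ h]; exact List.sublist_append_right _ _

lemma emb (n β : ℕ) (hβ : β ≤ 1) :
    ∀ (r : List ℕ) (x j : ℕ), 1 ≤ x → x ≤ n →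
    (∀ y ∈ r, 1 ≤ y ∧ y ≤ n) → List.Chain' (· ≠ ·) (x::r) → j % 2 = (x+β) % 2 →
    j + steps β x r ≤ n →
    ((x::r).map (· + β)) <+ runF n j (x+β) ++ sufW n (j+1) := by
  intro r
  induction r with
  | nil =>
    intro x j hx1 hxn _ _ hpar hbud
    simp only [steps] at hbud
    by_cases hj : j % 2 = 1
    · rw [runF, if_pos hj, ascF_head (by omega : (x+β) % 2 = 1) (by omega)]
      simp only [List.map_cons, List.map_nil, List.cons_append]
      exact List.cons_sublist_cons.2 (List.nil_sublist _)
    · have hxe : (x+β) % 2 = 0 := by omega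
      rw [runF, if_neg hj, descF_head hxe (by omega) (by omega)]
      simp only [List.map_cons, List.map_nil, List.cons_append]
      exact List.cons_sublist_cons.2 (List.nil_sublist _)
  | cons y r ih =>
    intro x j hx1 hxn hmem hch hpar hbud
    obtain ⟨hy1, hyn⟩ := hmem y (by simp)
    have hxy0 : x ≠ y := (List.isChain_cons_cons.1 hch).1
    have hch' : List.Chain' (· ≠ ·) (y::r) := (List.isChain_cons_cons.1 hch).2
    have hmem' : ∀ z ∈ r, 1 ≤ z ∧ z ≤ n := fun z hz => hmem z (by simp [hz])
    have hbud' : j + (gap β x y + steps β y r) ≤ n := hbud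
    have hstep : 0 ≤ steps β y r := Nat.zero_le _
    -- the part of the goal after peeling the head letter x+β
    have key : ((y::r).map (· + β)) <+ sufW n (j+1) ∨
        (x % 2 = y % 2 ∧ ((x < y) ↔ (x+β) % 2 = 1) ∧
          ((y::r).map (· + β)) <+ runF n j (y+β) ++ sufW n (j+1)) := by
      by_cases hpar2 : x % 2 = y % 2
      · by_cases hgood : (x < y) ↔ (x+β) % 2 = 1
        · right
          refine ⟨hpar2, hgood, ih y j hy1 hyn hmem' hch' (by omega) ?_⟩
          have hg : gap β x y = 0 := by rw [gap, if_pos hpar2, if_pos hgood]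
          omega
        · left
          have hg : gap β x y = 2 := by rw [gap, if_pos hpar2, if_neg hgood]
          have h1 := ih y (j+2) hy1 hyn hmem' hch' (by omega) (by omega)
          have h2 : runF n (j+2) (y+β) ++ sufW n (j+2+1) <+ sufW n (j+2) := by
            rw [sufW_succ (by omega : j+2 ≤ n)]
            exact (runF_sublist (by omega) (by omega)).append (List.Sublist.refl _)
          exact ((h1.trans h2).trans (sufW_tail (by omega)))
      · left
        have hg : gap β x y = 1 := by rw [gap, if_neg hpar2]
        have h1 := ih y (j+1) hy1 hyn hmem' hch' (by omega) (by omega)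
        have h2 : runF n (j+1) (y+β) ++ sufW n (j+1+1) <+ sufW n (j+1) := by
          rw [sufW_succ (by omega : j+1 ≤ n)]
          exact (runF_sublist (by omega) (by omega)).append (List.Sublist.refl _)
        exact h1.trans h2
    by_cases hj : j % 2 = 1
    · have hxo : (x+β) % 2 = 1 := by omega
      rw [runF, if_pos hj, ascF_head hxo (by omega), List.cons_append]
      simp only [List.map_cons]
      apply List.cons_sublist_cons.2
      rcases key with h | ⟨hpar2, hgood, h⟩
      · exact h.trans (List.sublist_append_right _ _)
      · refine h.trans (List.Sublist.append ?_ (List.Sublist.refl _))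
        rw [runF, if_pos hj]
        have hxy : x < y := hgood.2 hxo
        exact ascF_mono (by omega)
    · have hxe : (x+β) % 2 = 0 := by omega
      rw [runF, if_neg hj, descF_head hxe (by omega) (by omega), List.cons_append]
      simp only [List.map_cons]
      apply List.cons_sublist_cons.2
      rcases key with h | ⟨hpar2, hgood, h⟩
      · exact h.trans (List.sublist_append_right _ _)
      · refine h.trans (List.Sublist.append ?_ (List.Sublist.refl _))
        rw [runF, if_neg hj]
        have hyx : y < x := by
          rcases Nat.lt_trichotomy x y with h' | h' | h'
          · exact absurd ((hgood.1 h')) (by omega)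
          · exact absurd h' hxy0
          · exact h'
        exact descF_mono (by omega)

lemma len_asc : ∀ N, ((List.range' 1 N).filter fun k => decide (k % 2 = 1) && decide (1 ≤ k)).length = (N+1)/2 := by
  intro N
  induction N with
  | zero => rfl
  | succ N ih =>
    rw [List.range'_1_concat, List.filter_append, List.length_append, ih]
    have h1 : decide (1 ≤ 1 + N) = true := by simp
    by_cases h : (1+N) % 2 = 1 <;> simp [List.filter_cons, h, h1] <;> omega

lemma len_desc : ∀ N M, N < M → ((List.range' 1 N).filter fun k => decide (k % 2 = 0) && decide (k < M)).length = N/2 := by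
  intro N
  induction N with
  | zero => intro M _; rfl
  | succ N ih =>
    intro M hM
    rw [List.range'_1_concat, List.filter_append, List.length_append, ih M (by omega)]
    have h1 : decide (1 + N < M) = true := by simp; omega
    by_cases h : (1+N) % 2 = 0 <;> simp [List.filter_cons, h, h1] <;> omega

lemma len_zrun (n j : ℕ) : (zrun n j).length = if j % 2 = 1 then (n+2)/2 else (n+1)/2 := by
  unfold zrun
  split_ifs with h
  · unfold ascF; rw [len_asc]
  · unfold descF; rw [List.length_reverse, len_desc _ _ (by omega)]

lemma len_sufW (n : ℕ) : ∀ q j, 1 ≤ j → j + q = n + 1 →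
    2 * (sufW n j).length + (if q % 2 = 1 ∧ n % 2 = 0 then 1 else 0) = q * (n+1) := by
  intro q
  induction q with
  | zero =>
    intro j _ hj
    have : sufW n j = [] := by unfold sufW; rw [(by omega : n + 1 - j = 0)]; rfl
    simp [this]
  | succ q ih =>
    intro j hj1 hjq
    have hj : j ≤ n := by omega
    rw [sufW_succ hj, List.length_append]
    have ihh := ih (j+1) (by omega) (by omega)
    have hz := len_zrun n j
    have hm : (q+1)*(n+1) = q*(n+1) + (n+1) := by ring
    rw [hm]
    split_ifs at ihh hz ⊢ <;> omega

lemma len_W (n : ℕ) (hn : 1 ≤ n) : (W n).length = n * (n+1) / 2 := by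
  have h := len_sufW n n 1 (le_refl _) (by omega)
  have h2 : (if n % 2 = 1 ∧ n % 2 = 0 then 1 else 0) = 0 := by
    split_ifs with h' <;> omega
  rw [h2] at h
  unfold W
  omega

lemma mem_W {n x : ℕ} (h : x ∈ W n) : 1 ≤ x ∧ x ≤ n + 1 := by
  unfold W sufW at h
  obtain ⟨j, _, hx⟩ := List.mem_flatMap.1 h
  unfold zrun at hx
  split_ifs at hx
  · unfold ascF at hx
    have h1 := (List.mem_filter.1 hx).1
    have := List.mem_range'_1.1 h1
    omega
  · unfold descF at hx
    rw [List.mem_reverse] at hx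
    have h1 := (List.mem_filter.1 hx).1
    have := List.mem_range'_1.1 h1
    omega

lemma main_aux (n : ℕ) (hn : 1 ≤ n) (p : List ℕ) (hperm : IsPermWord n p) :
    ∃ u : List ℕ, List.Sublist u (W n) ∧ OrdIso u p := by
  obtain ⟨hlen, hnodup, hmem⟩ := hperm
  cases p with
  | nil => rw [List.length_nil] at hlen; omega
  | cons x r =>
    have hch : List.Chain' (· ≠ ·) (x::r) := List.Pairwise.isChain hnodup
    obtain ⟨hx1, hxn⟩ := hmem x (by simp)
    have hmem' : ∀ y ∈ r, 1 ≤ y ∧ y ≤ n := fun y hy => hmem y (by simp [hy])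
    have hlen' : r.length + 1 = n := by simpa using hlen
    obtain ⟨β, hβ, htot⟩ : ∃ β, β ≤ 1 ∧ start β x + steps β x r ≤ n := by
      have hs := steps_add x r
      have hst := start_add x
      by_cases h : start 0 x + steps 0 x r ≤ n
      · exact ⟨0, by omega, h⟩
      · exact ⟨1, by omega, by omega⟩
    have hj12 : start β x = 1 ∨ start β x = 2 := by unfold start; split_ifs <;> simp
    have hpar : start β x % 2 = (x+β) % 2 := by
      unfold start; split_ifs with h <;> omega
    have hembed := emb n β hβ r x (start β x) hx1 hxn hmem' hch hpar htot
    have hjn : start β x ≤ n := by have := Nat.zero_le (steps β x r); omega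
    have h2 : runF n (start β x) (x+β) ++ sufW n (start β x + 1) <+ sufW n (start β x) := by
      rw [sufW_succ hjn]
      exact (runF_sublist (by omega) (by omega)).append (List.Sublist.refl _)
    have h3 : sufW n (start β x) <+ W n := by
      unfold W
      rcases hj12 with h | h
      · rw [h]
      · rw [h]
        exact sufW_tail (by omega)
    refine ⟨(x::r).map (· + β), (hembed.trans h2).trans h3, List.length_map _, ?_⟩
    intro i j hi hj
    rw [List.length_map] at hi hj
    have e : ∀ i, i < (x::r).length → ((x::r).map (· + β)).getD i 0 = ((x::r).getD i 0) + β := by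
      intro i hi
      rw [List.getD_eq_getElem _ _ (by simpa using hi), List.getD_eq_getElem _ _ hi,
        List.getElem_map]
    rw [e i hi, e j hj]
    omega

end MillerAux

/-- Miller's bound: for all n ≥ 1 there is a word over {1,...,n+1} of length n(n+1)/2
containing a subsequence order-isomorphic to every permutation of length n. -/
theorem miller_upper_bound (n : Nat) (hn : 1 ≤ n) :
    ∃ w : List Nat, (∀ x ∈ w, 1 ≤ x ∧ x ≤ n + 1) ∧ w.length = n * (n + 1) / 2 ∧
      ∀ p : List Nat, IsPermWord n p → ∃ u : List Nat, List.Sublist u w ∧ OrdIso u p :=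
  ⟨MillerAux.W n, fun _ hx => MillerAux.mem_W hx, MillerAux.len_W n hn,
    fun p hp => MillerAux.main_aux n hn p hp⟩
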